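/- Let N ≥ 1, A ∈ ℝ^{2N×2N}, B ∈ ℝ^{2N×N}, and let P, Q be symmetric real 2N×2N matrices with AᵀP + PA = −Q. Let ε > 0, ρ̄ > 0, and let η, ρ : ℝ → ℝ^N × ℝ be functions with ‖η(t)‖ ≤ ρ(t) ≤ ρ̄ for all t. Let e : ℝ → ℝ^{2N} be differentiable and satisfy ė(t) = A e(t) + B(r(t) + η(t)), where w(t) = Bᵀ P e(t) and r(t) = −ρ(t) w(t)/‖w(t)‖ if ‖w(t)‖ > ε and r(t) = −ρ(t) w(t)/ε if ‖w(t)‖ ≤ ε. Then the Lyapunov function V(t) = ⟨e(t), P e(t)⟩ satisfies V̇(t) ≤ −⟨e(t), Q e(t)⟩ + ε ρ̄ / 2 for all t. -/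

import Mathlib

open Matrix
open scoped RealInnerProductSpace

/-- Matrix-vector multiplication viewed as a map between Euclidean spaces. -/
noncomputable def mv {m n : ℕ} (A : Matrix (Fin m) (Fin n) ℝ)
    (x : EuclideanSpace ℝ (Fin n)) : EuclideanSpace ℝ (Fin m) :=
  (EuclideanSpace.equiv (Fin m) ℝ).symm (A.mulVec ((EuclideanSpace.equiv (Fin n) ℝ) x))

lemma inner_mv {m n : ℕ} (A : Matrix (Fin m) (Fin n) ℝ)
    (x : EuclideanSpace ℝ (Fin m)) (y : EuclideanSpace ℝ (Fin n)) :
    ⟪x, mv A y⟫ = ⟪mv Aᵀ x, y⟫ := by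
  simp [mv, PiLp.inner_apply, Matrix.mulVec, dotProduct, Finset.mul_sum,
    Finset.sum_mul, mul_comm, mul_left_comm]
  simp only [mul_assoc]
  rw [Finset.sum_comm]

lemma mv_add {m n : ℕ} (A : Matrix (Fin m) (Fin n) ℝ) (x y : EuclideanSpace ℝ (Fin n)) :
    mv A (x + y) = mv A x + mv A y := by
  simp [mv, Matrix.mulVec_add]

lemma mv_smul {m n : ℕ} (A : Matrix (Fin m) (Fin n) ℝ) (c : ℝ) (x : EuclideanSpace ℝ (Fin n)) :
    mv A (c • x) = c • mv A x := by
  simp [mv, Matrix.mulVec_smul]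

lemma add_mv {m n : ℕ} (A B : Matrix (Fin m) (Fin n) ℝ) (x : EuclideanSpace ℝ (Fin n)) :
    mv (A + B) x = mv A x + mv B x := by
  simp [mv, Matrix.add_mulVec]

lemma neg_mv {m n : ℕ} (A : Matrix (Fin m) (Fin n) ℝ) (x : EuclideanSpace ℝ (Fin n)) :
    mv (-A) x = -(mv A x) := by
  simp [mv, Matrix.neg_mulVec]

lemma mv_mv {m n k : ℕ} (A : Matrix (Fin m) (Fin n) ℝ) (B : Matrix (Fin n) (Fin k) ℝ)
    (x : EuclideanSpace ℝ (Fin k)) : mv (A * B) x = mv A (mv B x) := by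
  simp [mv, Matrix.mulVec_mulVec]
  rw [← Matrix.mulVec_mulVec]; rfl

noncomputable def mvL {m n : ℕ} (A : Matrix (Fin m) (Fin n) ℝ) :
    EuclideanSpace ℝ (Fin n) →ₗ[ℝ] EuclideanSpace ℝ (Fin m) where
  toFun := mv A
  map_add' := mv_add A
  map_smul' := mv_smul A

lemma hasDerivAt_mv {m n : ℕ} (A : Matrix (Fin m) (Fin n) ℝ)
    {f : ℝ → EuclideanSpace ℝ (Fin n)} {f' : EuclideanSpace ℝ (Fin n)} {t : ℝ}
    (hf : HasDerivAt f f' t) :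
    HasDerivAt (fun s => mv A (f s)) (mv A f') t := by
  have := ((mvL A).toContinuousLinearMap.hasFDerivAt (x := f t)).comp_hasDerivAt t hf
  exact this

/-- Under the robust outer-loop control law, with
`AᵀP + PA = −Q`, `‖η(t)‖ ≤ ρ(t) ≤ ρ̄`, `w(t) = BᵀP e(t)`, and
`r(t) = −ρ(t) w(t)/‖w(t)‖` if `‖w(t)‖ > ε`, `r(t) = −ρ(t) w(t)/ε` otherwise,
the Lyapunov function `V(t) = ⟨e(t), P e(t)⟩` along the error dynamics
`ė = A e + B (r + η)` satisfies `V̇(t) ≤ −⟨e(t), Q e(t)⟩ + ε ρ̄ / 2`. -/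
theorem lyapunov_derivative_robust_bound
    (N : ℕ) (hN : 1 ≤ N)
    (A : Matrix (Fin (2 * N)) (Fin (2 * N)) ℝ)
    (B : Matrix (Fin (2 * N)) (Fin N) ℝ)
    (P Q : Matrix (Fin (2 * N)) (Fin (2 * N)) ℝ)
    (hP : P.IsSymm) (hQ : Q.IsSymm)
    (hLyap : Aᵀ * P + P * A = -Q)
    (ε ρbar : ℝ) (hε : 0 < ε) (hρbar : 0 < ρbar)
    (η : ℝ → EuclideanSpace ℝ (Fin N)) (ρ : ℝ → ℝ)
    (hηρ : ∀ t, ‖η t‖ ≤ ρ t) (hρ : ∀ t, ρ t ≤ ρbar)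
    (e : ℝ → EuclideanSpace ℝ (Fin (2 * N)))
    (w : ℝ → EuclideanSpace ℝ (Fin N))
    (hw : ∀ t, w t = mv Bᵀ (mv P (e t)))
    (r : ℝ → EuclideanSpace ℝ (Fin N))
    (hr : ∀ t, r t =
      if ε < ‖w t‖ then (-(ρ t / ‖w t‖)) • w t else (-(ρ t / ε)) • w t)
    (he : ∀ t, HasDerivAt e (mv A (e t) + mv B (r t + η t)) t) :
    ∀ t, DifferentiableAt ℝ (fun s => ⟪e s, mv P (e s)⟫) t ∧
      deriv (fun s => ⟪e s, mv P (e s)⟫) t ≤ -⟪e t, mv Q (e t)⟫ + ε * ρbar / 2 := by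
  intro t
  set u := r t + η t with hu
  have hD : HasDerivAt (fun s => ⟪e s, mv P (e s)⟫)
      (⟪e t, mv P (mv A (e t) + mv B u)⟫ + ⟪mv A (e t) + mv B u, mv P (e t)⟫) t :=
    (he t).inner ℝ (hasDerivAt_mv P (he t))
  refine ⟨hD.differentiableAt, ?_⟩
  rw [hD.deriv]
  -- quadratic term
  have hAA : ⟪e t, mv P (mv A (e t))⟫ + ⟪mv A (e t), mv P (e t)⟫ = -⟪e t, mv Q (e t)⟫ := by
    have h1 : ⟪e t, mv P (mv A (e t))⟫ = ⟪e t, mv (P * A) (e t)⟫ := by rw [mv_mv]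
    have h2 : ⟪mv A (e t), mv P (e t)⟫ = ⟪e t, mv (Aᵀ * P) (e t)⟫ := by
      rw [real_inner_comm, inner_mv, mv_mv, real_inner_comm]
    rw [h1, h2, ← inner_add_right, ← add_mv, add_comm (P * A), hLyap, neg_mv, inner_neg_right]
  -- cross term
  have hB1 : ⟪e t, mv P (mv B u)⟫ = ⟪w t, u⟫ := by
    rw [inner_mv, hP.eq, inner_mv, ← hw, real_inner_comm]
  have hB2 : ⟪mv B u, mv P (e t)⟫ = ⟪w t, u⟫ := by
    rw [real_inner_comm, inner_mv, ← hw]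
  have hexp : ⟪e t, mv P (mv A (e t) + mv B u)⟫ + ⟪mv A (e t) + mv B u, mv P (e t)⟫
      = -⟪e t, mv Q (e t)⟫ + 2 * ⟪w t, u⟫ := by
    rw [mv_add, inner_add_right, inner_add_left, hB1, hB2]
    linarith [hAA]
  rw [hexp]
  have hρ0 : 0 ≤ ρ t := le_trans (norm_nonneg _) (hηρ t)
  have hwη : ⟪w t, η t⟫ ≤ ‖w t‖ * ρ t :=
    le_trans (real_inner_le_norm _ _) (mul_le_mul_of_nonneg_left (hηρ t) (norm_nonneg _))
  have hsplit : ⟪w t, u⟫ = ⟪w t, r t⟫ + ⟪w t, η t⟫ := inner_add_right _ _ _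
  have hself : ⟪w t, w t⟫ = ‖w t‖ ^ 2 := real_inner_self_eq_norm_sq _
  rw [hsplit, hr t]
  split_ifs with h
  · have hs : (0:ℝ) < ‖w t‖ := hε.trans h
    have hinv : ρ t / ‖w t‖ * ‖w t‖ = ρ t := div_mul_cancel₀ _ hs.ne'
    rw [real_inner_smul_right, hself]
    nlinarith [mul_pos hε hρbar, sq_nonneg (‖w t‖)]
  · have hs : ‖w t‖ ≤ ε := not_lt.1 h
    have hx : 0 ≤ ρ t / ε := div_nonneg hρ0 hε.le
    have hinv : ρ t / ε * ε = ρ t := div_mul_cancel₀ _ hε.ne'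
    rw [real_inner_smul_right, hself]
    nlinarith [mul_nonneg hx (sq_nonneg (2 * ‖w t‖ - ε)), hρ t, hε.le, norm_nonneg (w t)]
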